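/- For a 2D one-neuron network f(x1,x2) = w2 * σ(a1*x1 + a2*x2 + b1) + b2 with a1, a2 ≠ 0, the integral over [-1,1]² equals 4*w2 + 4*b2 + (w2/(a1*a2)) * [Li₂(-e^{a1+a2-b1}) - Li₂(-e^{a1-a2-b1}) - Li₂(-e^{-a1+a2-b1}) + Li₂(-e^{-a1-a2-b1})]. -/

import Mathlib

/-- The real dilogarithm, defined for nonpositive arguments by
`Li₂(x) = -∫₀ˣ log(1-u)/u du`. -/
noncomputable def Li2 (x : ℝ) : ℝ := -∫ u in (0 : ℝ)..x, Real.log (1 - u) / u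

/-- The logistic sigmoid. -/
noncomputable def sigmoid (z : ℝ) : ℝ := 1 / (1 + Real.exp (-z))


lemma g_meas : Measurable (fun u : ℝ => Real.log (1 - u) / u) :=
  (Real.measurable_log.comp (measurable_const.sub measurable_id)).div measurable_id

lemma g_bdd {u : ℝ} (hu : u ≤ 0) : ‖Real.log (1 - u) / u‖ ≤ 1 := by
  rcases eq_or_lt_of_le hu with h | h
  · subst h; norm_num
  · have h1 : (0:ℝ) ≤ Real.log (1 - u) := Real.log_nonneg (by linarith)
    have h2 : Real.log (1 - u) ≤ -u := by
      have := Real.log_le_sub_one_of_pos (x := 1 - u) (by linarith)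
      linarith
    rw [Real.norm_eq_abs, abs_le]
    constructor
    · rw [le_div_iff_of_neg h]
      linarith
    · exact (div_nonpos_of_nonneg_of_nonpos h1 hu).trans zero_le_one

lemma g_intable {x : ℝ} (hx : x ≤ 0) :
    IntervalIntegrable (fun u : ℝ => Real.log (1 - u) / u) MeasureTheory.volume 0 x := by
  rw [intervalIntegrable_iff]
  apply MeasureTheory.Measure.integrableOn_of_bounded (M := 1)
  · exact (measure_Ioc_lt_top).ne
  · exact g_meas.aestronglyMeasurable
  · refine MeasureTheory.ae_restrict_of_forall_mem measurableSet_uIoc ?_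
    intro u hu
    rw [Set.uIoc_of_ge hx] at hu
    exact g_bdd hu.2

lemma li2_hasDerivAt {x : ℝ} (hx : x < 0) :
    HasDerivAt Li2 (-(Real.log (1 - x) / x)) x := by
  have h := intervalIntegral.integral_hasDerivAt_right (g_intable hx.le)
    (g_meas.aestronglyMeasurable.stronglyMeasurableAtFilter)
    (ContinuousAt.div ((Real.continuousAt_log (by linarith)).comp
      (by fun_prop)) continuousAt_id hx.ne)
  exact h.neg

lemma li2_exp_hasDerivAt (t : ℝ) :
    HasDerivAt (fun t => Li2 (-Real.exp t)) (-Real.log (1 + Real.exp t)) t := by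
  have het : Real.exp t > 0 := Real.exp_pos t
  have h1 : HasDerivAt (fun t : ℝ => -Real.exp t) (-Real.exp t) t := (Real.hasDerivAt_exp t).neg
  have h2 := (li2_hasDerivAt (x := -Real.exp t) (by linarith)).comp t h1
  refine h2.congr_deriv ?_
  field_simp
  rw [sub_neg_eq_add]



lemma sigmoid_cont : Continuous sigmoid :=
  continuous_const.div (by continuity) (fun z => by positivity)

lemma log1pexp_hasDerivAt (s : ℝ) :
    HasDerivAt (fun s => Real.log (1 + Real.exp s)) (Real.exp s / (1 + Real.exp s)) s := by
  have := ((Real.hasDerivAt_exp s).const_add 1).log (by positivity)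
  simpa using this

lemma inner_int (w2 b1 b2 a1 a2 x1 : ℝ) (ha2 : a2 ≠ 0) :
    (∫ x2 in (-1 : ℝ)..1, (w2 * sigmoid (a1 * x1 + a2 * x2 + b1) + b2))
      = 2 * w2 + 2 * b2 + (w2 / a2) *
        (Real.log (1 + Real.exp (-(a1 * x1 + a2 + b1)))
          - Real.log (1 + Real.exp (-(a1 * x1 - a2 + b1)))) := by
  have key : ∀ x2 : ℝ, HasDerivAt
      (fun x2 => (w2 + b2) * x2 + (w2 / a2) * Real.log (1 + Real.exp (-(a1 * x1 + a2 * x2 + b1))))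
      (w2 * sigmoid (a1 * x1 + a2 * x2 + b1) + b2) x2 := by
    intro x2
    have hs : HasDerivAt (fun x2 : ℝ => -(a1 * x1 + a2 * x2 + b1)) (-a2) x2 := by
      have := (((hasDerivAt_id x2).const_mul a2).const_add (a1*x1)).add_const b1 |>.neg
      simp only [id, mul_one] at this
      exact this
    have h2 := ((log1pexp_hasDerivAt (-(a1 * x1 + a2 * x2 + b1))).comp x2 hs).const_mul (w2/a2)
    have h1 := (hasDerivAt_id x2).const_mul (w2 + b2)
    have h := h1.add h2
    refine h.congr_deriv ?_
    have hpos : (0:ℝ) < 1 + Real.exp (-(a1 * x1 + a2 * x2 + b1)) := by positivity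
    simp only [sigmoid, Function.comp]
    field_simp
    ring
  have hc : Continuous (fun x2 : ℝ => w2 * sigmoid (a1 * x1 + a2 * x2 + b1) + b2) :=
    (continuous_const.mul (sigmoid_cont.comp (by continuity))).add continuous_const
  rw [intervalIntegral.integral_eq_sub_of_hasDerivAt (fun x2 _ => key x2)
    (hc.intervalIntegrable _ _)]
  ring_nf

theorem sigmoid_network_integral_2d_1neuron
    (w2 b1 b2 a1 a2 : ℝ) (ha1 : a1 ≠ 0) (ha2 : a2 ≠ 0) :
    (∫ x1 in (-1 : ℝ)..1, ∫ x2 in (-1 : ℝ)..1,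
        (w2 * sigmoid (a1 * x1 + a2 * x2 + b1) + b2))
      = 4 * w2 + 4 * b2 + (w2 / (a1 * a2)) *
          (Li2 (-Real.exp (a1 + a2 - b1)) - Li2 (-Real.exp (a1 - a2 - b1))
            - Li2 (-Real.exp (-a1 + a2 - b1)) + Li2 (-Real.exp (-a1 - a2 - b1))) := by
  have hrw : (∫ x1 in (-1 : ℝ)..1, ∫ x2 in (-1 : ℝ)..1,
      (w2 * sigmoid (a1 * x1 + a2 * x2 + b1) + b2))
      = ∫ x1 in (-1 : ℝ)..1, (2 * w2 + 2 * b2 + (w2 / a2) *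
        (Real.log (1 + Real.exp (-(a1 * x1 + a2 + b1)))
          - Real.log (1 + Real.exp (-(a1 * x1 - a2 + b1))))) := by
    apply intervalIntegral.integral_congr
    intro x1 _
    exact inner_int w2 b1 b2 a1 a2 x1 ha2
  rw [hrw]
  have anti : ∀ c : ℝ, ∀ x : ℝ, HasDerivAt
      (fun x => (1 / a1) * Li2 (-Real.exp (-(a1 * x + c))))
      (Real.log (1 + Real.exp (-(a1 * x + c)))) x := by
    intro c x
    have hs : HasDerivAt (fun x : ℝ => -(a1 * x + c)) (-a1) x := by
      have := ((hasDerivAt_id x).const_mul a1).add_const c |>.neg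
      simp only [id, mul_one] at this
      exact this
    have h := ((li2_exp_hasDerivAt (-(a1 * x + c))).comp x hs).const_mul (1/a1)
    refine h.congr_deriv ?_
    field_simp
  have key : ∀ x : ℝ, HasDerivAt
      (fun x => (2 * w2 + 2 * b2) * x + (w2 / a2) *
        ((1 / a1) * Li2 (-Real.exp (-(a1 * x + (a2 + b1))))
          - (1 / a1) * Li2 (-Real.exp (-(a1 * x + (-a2 + b1))))))
      (2 * w2 + 2 * b2 + (w2 / a2) *
        (Real.log (1 + Real.exp (-(a1 * x + a2 + b1)))
          - Real.log (1 + Real.exp (-(a1 * x - a2 + b1))))) x := by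
    intro x
    have h1 := (hasDerivAt_id x).const_mul (2 * w2 + 2 * b2)
    have h2 := ((anti (a2 + b1) x).sub (anti (-a2 + b1) x)).const_mul (w2 / a2)
    have h := h1.add h2
    refine h.congr_deriv ?_
    ring_nf
  have hcont : Continuous (fun x : ℝ => 2 * w2 + 2 * b2 + (w2 / a2) *
      (Real.log (1 + Real.exp (-(a1 * x + a2 + b1)))
        - Real.log (1 + Real.exp (-(a1 * x - a2 + b1))))) := by
    apply continuous_const.add
    apply Continuous.mul continuous_const
    apply Continuous.sub
    · exact ((continuous_const.add (Real.continuous_exp.comp (by continuity))).log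
        (fun x => by positivity : ∀ x:ℝ, 1 + Real.exp _ ≠ 0))
    · exact ((continuous_const.add (Real.continuous_exp.comp (by continuity))).log
        (fun x => by positivity : ∀ x:ℝ, 1 + Real.exp _ ≠ 0))
  rw [intervalIntegral.integral_eq_sub_of_hasDerivAt (fun x _ => key x)
    (hcont.intervalIntegrable _ _)]
  have e1 : -(a1 * (1:ℝ) + (a2 + b1)) = -a1 - a2 - b1 := by ring
  have e2 : -(a1 * (1:ℝ) + (-a2 + b1)) = -a1 + a2 - b1 := by ring
  have e3 : -(a1 * (-1:ℝ) + (a2 + b1)) = a1 - a2 - b1 := by ring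
  have e4 : -(a1 * (-1:ℝ) + (-a2 + b1)) = a1 + a2 - b1 := by ring
  rw [e1, e2, e3, e4]
  field_simp
  ring
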